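/- Let H and K be complex Hilbert spaces, let C ∈ B(H) and D ∈ B(K) be invertible, and assume a bilinear form u : H × K → ℂ satisfies |u(x,y)| ≤ ‖x‖·‖y‖ + ‖Cx‖·‖Dy‖ for all x ∈ H, y ∈ K. Then for any finite families x₁,…,x_m ∈ H and y₁,…,y_m ∈ K one has |Σᵢ₌₁^m u(xᵢ, yᵢ)| ≤ ‖Σᵢ₌₁^m xᵢ ⊗ yᵢ‖_π + ‖Σᵢ₌₁^m Cxᵢ ⊗ Dyᵢ‖_π. -/

import Mathlib

open scoped TensorProduct

/-- The projective norm on the algebraic tensor product `H ⊗ K`: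
`‖w‖_π = inf { Σᵢ ‖xᵢ‖‖yᵢ‖ : w = Σᵢ xᵢ ⊗ yᵢ }`, the infimum over all finite
representations of `w`. -/
noncomputable def projNorm {H K : Type*} [NormedAddCommGroup H] [InnerProductSpace ℂ H]
    [NormedAddCommGroup K] [InnerProductSpace ℂ K] (w : H ⊗[ℂ] K) : ℝ :=
  sInf { r : ℝ | ∃ (m : ℕ) (x : Fin m → H) (y : Fin m → K),
    w = ∑ i, x i ⊗ₜ[ℂ] y i ∧ r = ∑ i, ‖x i‖ * ‖y i‖ }


open Finset

noncomputable section

local notation "⟪" x ", " y "⟫" => @inner ℂ _ _ x y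

namespace ProjAux

lemma mul_conj_norm (w : ℂ) : w * (starRingEnd ℂ) w = ((‖w‖ ^ 2 : ℝ) : ℂ) := by
  rw [Complex.mul_conj]
  norm_cast
  rw [Complex.normSq_eq_norm_sq]

variable {Y Z : Type*}
  [NormedAddCommGroup Y] [InnerProductSpace ℂ Y] [FiniteDimensional ℂ Y]
  [NormedAddCommGroup Z] [InnerProductSpace ℂ Z] [FiniteDimensional ℂ Z]

/-- rank one map `w ↦ ⟪y, w⟫ • z`. -/
def rk1 (z : Z) (y : Y) : Y →ₗ[ℂ] Z where
  toFun w := ⟪y, w⟫ • z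
  map_add' a b := by simp only [inner_add_right, add_smul]
  map_smul' c a := by simp only [inner_smul_right, RingHom.id_apply, smul_smul]

@[simp] lemma rk1_apply (z : Z) (y : Y) (w : Y) : rk1 z y w = ⟪y, w⟫ • z := rfl

variable (T : Y →ₗ[ℂ] Y) (hT : T.IsSymmetric)

/-- eigenbasis -/
def eb : OrthonormalBasis (Fin (Module.finrank ℂ Y)) ℂ Y :=
  hT.eigenvectorBasis rfl

/-- eigenvalues -/
def ev : Fin (Module.finrank ℂ Y) → ℝ := hT.eigenvalues rfl

lemma T_eb (i : Fin (Module.finrank ℂ Y)) : T (eb T hT i) = (ev T hT i : ℂ) • eb T hT i :=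
  hT.apply_eigenvectorBasis rfl i

/-- functional calculus -/
def opCal (f : ℝ → ℝ) : Y →ₗ[ℂ] Y :=
  ∑ i, ((f (ev T hT i) : ℂ)) • rk1 (eb T hT i) (eb T hT i)

lemma opCal_apply (f : ℝ → ℝ) (z : Y) :
    opCal T hT f z = ∑ i, (f (ev T hT i) : ℂ) • (⟪eb T hT i, z⟫ • eb T hT i) := by
  simp [opCal]

lemma inner_eb (i j : Fin (Module.finrank ℂ Y)) :
    ⟪eb T hT i, eb T hT j⟫ = if i = j then 1 else 0 :=
  orthonormal_iff_ite.1 (eb T hT).orthonormal i j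

lemma opCal_eb (f : ℝ → ℝ) (j : Fin (Module.finrank ℂ Y)) :
    opCal T hT f (eb T hT j) = (f (ev T hT j) : ℂ) • eb T hT j := by
  rw [opCal_apply]
  rw [Finset.sum_eq_single j]
  · rw [inner_eb]; simp
  · intro i _ hij; rw [inner_eb]; simp [hij]
  · simp

lemma onb_ext {W : Type*} [AddCommGroup W] [Module ℂ W] (A B : Y →ₗ[ℂ] W)
    (h : ∀ i, A (eb T hT i) = B (eb T hT i)) : A = B :=
  (eb T hT).toBasis.ext (fun i => by simpa using h i)

lemma opCal_comp (f g : ℝ → ℝ) :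
    opCal T hT f ∘ₗ opCal T hT g = opCal T hT (fun t => f t * g t) := by
  refine onb_ext T hT _ _ (fun i => ?_)
  simp only [LinearMap.comp_apply, opCal_eb, map_smul, smul_smul]
  push_cast
  ring_nf

lemma opCal_id : opCal T hT (fun t => t) = T := by
  refine onb_ext T hT _ _ (fun i => ?_)
  rw [opCal_eb, T_eb]

lemma opCal_symm (f : ℝ → ℝ) : (opCal T hT f).IsSymmetric := by
  intro x y
  rw [opCal_apply, opCal_apply, inner_sum, sum_inner]
  refine Finset.sum_congr rfl (fun i _ => ?_)
  simp only [inner_smul_left, inner_smul_right, Complex.conj_ofReal, map_mul]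
  rw [inner_conj_symm]
  ring

lemma opCal_adjoint (f : ℝ → ℝ) :
    LinearMap.adjoint (opCal T hT f) = opCal T hT f :=
  ((LinearMap.eq_adjoint_iff _ _).2 (fun x y => opCal_symm T hT f x y)).symm

lemma inner_opCal_self (f : ℝ → ℝ) (z : Y) :
    ⟪z, opCal T hT f z⟫ = ((∑ i, f (ev T hT i) * ‖⟪eb T hT i, z⟫‖ ^ 2 : ℝ) : ℂ) := by
  rw [opCal_apply, inner_sum, Complex.ofReal_sum]
  refine Finset.sum_congr rfl (fun i _ => ?_)
  rw [inner_smul_right, inner_smul_right, Complex.ofReal_mul]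
  congr 1
  have hcc : ⟪z, eb T hT i⟫ = (starRingEnd ℂ) ⟪eb T hT i, z⟫ := (inner_conj_symm _ _).symm
  rw [hcc]
  exact mul_conj_norm _

lemma opCal_congr (f g : ℝ → ℝ) (h : ∀ i, f (ev T hT i) = g (ev T hT i)) :
    opCal T hT f = opCal T hT g := by
  refine onb_ext T hT _ _ (fun i => ?_)
  rw [opCal_eb, opCal_eb, h i]

/-- Parseval via `opCal 1 = id` -/
lemma norm_sq_eq_sum (z : Y) : (‖z‖ ^ 2 : ℝ) = ∑ i, ‖⟪eb T hT i, z⟫‖ ^ 2 := by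
  have h1 : opCal T hT (fun _ => 1) = LinearMap.id := by
    refine onb_ext T hT _ _ (fun i => ?_)
    rw [opCal_eb]; simp
  have h2 := inner_opCal_self T hT (fun _ => 1) z
  rw [h1] at h2
  simp only [LinearMap.id_coe, id_eq] at h2
  have h3 : ⟪z, z⟫ = ((‖z‖ ^ 2 : ℝ) : ℂ) := by
    rw [inner_self_eq_norm_sq_to_K]; norm_cast
  rw [h3] at h2
  have := Complex.ofReal_injective h2
  simpa using this

lemma norm_opCal_sq (f : ℝ → ℝ) (z : Y) :
    (‖opCal T hT f z‖ ^ 2 : ℝ) = ∑ i, (f (ev T hT i))^2 * ‖⟪eb T hT i, z⟫‖ ^ 2 := by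
  have h0 : ⟪opCal T hT f z, opCal T hT f z⟫ = ⟪z, opCal T hT (fun t => f t * f t) z⟫ := by
    calc ⟪opCal T hT f z, opCal T hT f z⟫ = ⟪z, opCal T hT f (opCal T hT f z)⟫ :=
          opCal_symm T hT f z (opCal T hT f z)
      _ = ⟪z, opCal T hT (fun t => f t * f t) z⟫ := by rw [← opCal_comp]; rfl
  have h1 : ⟪z, opCal T hT (fun t => f t * f t) z⟫
      = ((∑ i, (f (ev T hT i))^2 * ‖⟪eb T hT i, z⟫‖ ^ 2 : ℝ) : ℂ) := by
    rw [inner_opCal_self]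
    norm_cast
    exact Finset.sum_congr rfl (fun i _ => by ring)
  have h3 : ⟪opCal T hT f z, opCal T hT f z⟫ = ((‖opCal T hT f z‖ ^ 2 : ℝ) : ℂ) := by
    rw [inner_self_eq_norm_sq_to_K]; norm_cast
  exact Complex.ofReal_injective (h3.symm.trans (h0.trans h1))

lemma norm_opCal_le (f : ℝ → ℝ) (h : ∀ i, |f (ev T hT i)| ≤ 1) (z : Y) :
    ‖opCal T hT f z‖ ≤ ‖z‖ := by
  have h1 : (‖opCal T hT f z‖ ^ 2 : ℝ) ≤ ‖z‖ ^ 2 := by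
    rw [norm_opCal_sq, norm_sq_eq_sum T hT z]
    refine Finset.sum_le_sum (fun i _ => ?_)
    have h2 : (f (ev T hT i))^2 ≤ 1 := by
      have := h i
      nlinarith [abs_nonneg (f (ev T hT i)), le_abs_self (f (ev T hT i)),
        neg_abs_le (f (ev T hT i))]
    nlinarith [sq_nonneg ‖⟪eb T hT i, z⟫‖]
  nlinarith [norm_nonneg (opCal T hT f z), norm_nonneg z]

lemma inner_self_ofReal (z : Y) : ⟪z, z⟫ = ((‖z‖ ^ 2 : ℝ) : ℂ) := by
  rw [inner_self_eq_norm_sq_to_K]; norm_cast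

lemma ev_eq (i : Fin (Module.finrank ℂ Y)) :
    ((ev T hT i : ℝ) : ℂ) = ⟪eb T hT i, T (eb T hT i)⟫ := by
  rw [T_eb, inner_smul_right, inner_eb]
  simp

lemma comp_opCal {W : Type*} [AddCommGroup W] [Module ℂ W] (R : Y →ₗ[ℂ] W) (f : ℝ → ℝ)
    (h : ∀ i, f (ev T hT i) = 1 ∨ (f (ev T hT i) = 0 ∧ R (eb T hT i) = 0)) :
    R ∘ₗ opCal T hT f = R := by
  refine onb_ext T hT _ _ (fun i => ?_)
  simp only [LinearMap.comp_apply, opCal_eb, map_smul]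
  rcases h i with h1 | ⟨h1, h2⟩
  · rw [h1]; simp
  · rw [h1, h2]; simp

lemma adj_eq_of_symm {W : Type*} [NormedAddCommGroup W] [InnerProductSpace ℂ W]
    [FiniteDimensional ℂ W] (A : W →ₗ[ℂ] W) (h : A.IsSymmetric) :
    LinearMap.adjoint A = A :=
  ((LinearMap.eq_adjoint_iff A A).2 (fun x y => h x y)).symm

lemma sandwich_symm {W : Type*} [NormedAddCommGroup W] [InnerProductSpace ℂ W]
    [FiniteDimensional ℂ W] (A : W →ₗ[ℂ] W) (hA : A.IsSymmetric) (R : Y →ₗ[ℂ] W) :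
    (LinearMap.adjoint R ∘ₗ A ∘ₗ R).IsSymmetric := by
  intro x y
  simp only [LinearMap.comp_apply]
  rw [LinearMap.adjoint_inner_left, hA, LinearMap.adjoint_inner_right]

end ProjAux


namespace ProjAux

section Core

variable {X X' Y Y' : Type*}
  [NormedAddCommGroup X] [InnerProductSpace ℂ X] [FiniteDimensional ℂ X]
  [NormedAddCommGroup X'] [InnerProductSpace ℂ X'] [FiniteDimensional ℂ X']
  [NormedAddCommGroup Y] [InnerProductSpace ℂ Y] [FiniteDimensional ℂ Y]
  [NormedAddCommGroup Y'] [InnerProductSpace ℂ Y'] [FiniteDimensional ℂ Y']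

variable (V : Y →ₗ[ℂ] X) (Cb : X ≃ₗ[ℂ] X') (Eb : Y ≃ₗ[ℂ] Y')

/-- the conjugated operator -/
def wB : Y' →ₗ[ℂ] X' :=
  (Cb : X →ₗ[ℂ] X') ∘ₗ V ∘ₗ LinearMap.adjoint (Eb : Y →ₗ[ℂ] Y')

/-- |w|² -/
def AB : Y' →ₗ[ℂ] Y' := LinearMap.adjoint (wB V Cb Eb) ∘ₗ wB V Cb Eb

lemma hAB : (AB V Cb Eb).IsSymmetric := by
  intro x y
  simp only [AB, LinearMap.comp_apply]
  rw [LinearMap.adjoint_inner_left, LinearMap.adjoint_inner_right]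

/-- pseudo inverse of sqrt -/
noncomputable def psq (t : ℝ) : ℝ := if t = 0 then 0 else (Real.sqrt t)⁻¹

noncomputable def aw : Y' →ₗ[ℂ] Y' := opCal (AB V Cb Eb) (hAB V Cb Eb) Real.sqrt
noncomputable def awp : Y' →ₗ[ℂ] Y' := opCal (AB V Cb Eb) (hAB V Cb Eb) psq
noncomputable def Uc : Y' →ₗ[ℂ] X' := wB V Cb Eb ∘ₗ awp V Cb Eb

end Core

section SqFacts

variable {Y Z : Type*}
  [NormedAddCommGroup Y] [InnerProductSpace ℂ Y] [FiniteDimensional ℂ Y]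
  [NormedAddCommGroup Z] [InnerProductSpace ℂ Z] [FiniteDimensional ℂ Z]

/-- For `T = adjoint R ∘ R`, facts about eigenvalues and `sqrt`/`psq` calculus. -/
lemma ev_sq_nonneg (R : Y →ₗ[ℂ] Z) (hT : (LinearMap.adjoint R ∘ₗ R).IsSymmetric)
    (i : Fin (Module.finrank ℂ Y)) :
    ((ev _ hT i : ℝ) : ℂ) = ((‖R (eb _ hT i)‖ ^ 2 : ℝ) : ℂ) := by
  rw [ev_eq]
  simp only [LinearMap.comp_apply]
  rw [LinearMap.adjoint_inner_right, inner_self_ofReal]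

lemma ev_sq_nonneg' (R : Y →ₗ[ℂ] Z) (hT : (LinearMap.adjoint R ∘ₗ R).IsSymmetric)
    (i : Fin (Module.finrank ℂ Y)) : 0 ≤ ev _ hT i := by
  have := Complex.ofReal_injective (ev_sq_nonneg R hT i)
  rw [this]
  positivity

lemma ev_zero_apply (R : Y →ₗ[ℂ] Z) (hT : (LinearMap.adjoint R ∘ₗ R).IsSymmetric)
    (i : Fin (Module.finrank ℂ Y)) (h : ev _ hT i = 0) : R (eb _ hT i) = 0 := by
  have h2 := Complex.ofReal_injective (ev_sq_nonneg R hT i)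
  rw [h] at h2
  have : ‖R (eb _ hT i)‖ = 0 := by nlinarith [norm_nonneg (R (eb _ hT i))]
  simpa using this

/-- `‖opCal sqrt z‖ = ‖R z‖` -/
lemma norm_opCal_sqrt (R : Y →ₗ[ℂ] Z) (hT : (LinearMap.adjoint R ∘ₗ R).IsSymmetric) (z : Y) :
    ‖opCal _ hT Real.sqrt z‖ = ‖R z‖ := by
  have h1 : (‖opCal _ hT Real.sqrt z‖ ^ 2 : ℝ) = ‖R z‖ ^ 2 := by
    rw [norm_opCal_sq]
    have h2 : ((‖R z‖ ^ 2 : ℝ) : ℂ) = ⟪z, (LinearMap.adjoint R ∘ₗ R) z⟫ := by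
      simp only [LinearMap.comp_apply]
      rw [LinearMap.adjoint_inner_right, inner_self_ofReal]
    rw [← opCal_id _ hT, inner_opCal_self] at h2
    have h3 := Complex.ofReal_injective h2
    rw [h3]
    refine Finset.sum_congr rfl (fun i _ => ?_)
    rw [Real.sq_sqrt (ev_sq_nonneg' R hT i)]
  nlinarith [norm_nonneg (opCal _ hT Real.sqrt z), norm_nonneg (R z),
    sq_nonneg (‖opCal _ hT Real.sqrt z‖ - ‖R z‖)]

/-- `R ∘ opCal (psq * sqrt) = R` -/
lemma R_comp_ind (R : Y →ₗ[ℂ] Z) (hT : (LinearMap.adjoint R ∘ₗ R).IsSymmetric) :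
    R ∘ₗ opCal _ hT (fun t => psq t * Real.sqrt t) = R := by
  refine comp_opCal _ hT R _ (fun i => ?_)
  by_cases h : ev _ hT i = 0
  · right
    refine ⟨by simp [h, psq], ev_zero_apply R hT i h⟩
  · left
    have hpos : 0 < ev _ hT i := lt_of_le_of_ne (ev_sq_nonneg' R hT i) (Ne.symm h)
    simp only [psq, if_neg h]
    rw [inv_mul_cancel₀ (ne_of_gt (Real.sqrt_pos.2 hpos))]

end SqFacts

end ProjAux


namespace ProjAux

section SqFacts2

variable {Y Z : Type*}
  [NormedAddCommGroup Y] [InnerProductSpace ℂ Y] [FiniteDimensional ℂ Y]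
  [NormedAddCommGroup Z] [InnerProductSpace ℂ Z] [FiniteDimensional ℂ Z]

lemma hRR (R : Y →ₗ[ℂ] Z) : (LinearMap.adjoint R ∘ₗ R).IsSymmetric := by
  intro x y
  simp only [LinearMap.comp_apply]
  rw [LinearMap.adjoint_inner_left, LinearMap.adjoint_inner_right]

lemma norm_R_psq_le (R : Y →ₗ[ℂ] Z) (hT : (LinearMap.adjoint R ∘ₗ R).IsSymmetric) (z : Y) :
    ‖R (opCal _ hT psq z)‖ ≤ ‖z‖ := by
  rw [← norm_opCal_sqrt R hT]
  have h1 : opCal _ hT Real.sqrt (opCal _ hT psq z)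
      = opCal _ hT (fun t => Real.sqrt t * psq t) z := by
    rw [← opCal_comp]; rfl
  rw [h1]
  refine norm_opCal_le _ hT _ (fun i => ?_) z
  by_cases h : ev _ hT i = 0
  · simp [h, psq]
  · have hpos : 0 < ev _ hT i := lt_of_le_of_ne (ev_sq_nonneg' R hT i) (Ne.symm h)
    simp only [psq, if_neg h]
    rw [mul_inv_cancel₀ (ne_of_gt (Real.sqrt_pos.2 hpos))]
    norm_num

lemma psq_comp (R : Y →ₗ[ℂ] Z) (hT : (LinearMap.adjoint R ∘ₗ R).IsSymmetric) :
    opCal _ hT psq ∘ₗ (LinearMap.adjoint R ∘ₗ R) = opCal _ hT Real.sqrt := by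
  refine onb_ext _ hT _ _ (fun i => ?_)
  show opCal _ hT psq ((LinearMap.adjoint R ∘ₗ R) (eb _ hT i)) = _
  rw [T_eb _ hT, map_smul, opCal_eb, opCal_eb, smul_smul]
  congr 1
  rw [← Complex.ofReal_mul]
  congr 1
  by_cases h : ev _ hT i = 0
  · simp [h, psq]
  · have hpos : 0 < ev _ hT i := lt_of_le_of_ne (ev_sq_nonneg' R hT i) (Ne.symm h)
    simp only [psq, if_neg h]
    rw [mul_comm, inv_mul_eq_div, Real.div_sqrt]

lemma adj_id : LinearMap.adjoint (LinearMap.id : Y →ₗ[ℂ] Y) = LinearMap.id :=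
  adj_eq_of_symm _ (fun _ _ => rfl)

end SqFacts2

section Core2

variable {X X' Y Y' : Type*}
  [NormedAddCommGroup X] [InnerProductSpace ℂ X] [FiniteDimensional ℂ X]
  [NormedAddCommGroup X'] [InnerProductSpace ℂ X'] [FiniteDimensional ℂ X']
  [NormedAddCommGroup Y] [InnerProductSpace ℂ Y] [FiniteDimensional ℂ Y]
  [NormedAddCommGroup Y'] [InnerProductSpace ℂ Y'] [FiniteDimensional ℂ Y']

variable (V : Y →ₗ[ℂ] X) (Cb : X ≃ₗ[ℂ] X') (Eb : Y ≃ₗ[ℂ] Y')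

lemma norm_aw (z : Y') : ‖aw V Cb Eb z‖ = ‖wB V Cb Eb z‖ :=
  norm_opCal_sqrt (wB V Cb Eb) (hAB V Cb Eb) z

lemma U_aw : Uc V Cb Eb ∘ₗ aw V Cb Eb = wB V Cb Eb := by
  have h1 : Uc V Cb Eb ∘ₗ aw V Cb Eb
      = wB V Cb Eb ∘ₗ opCal _ (hAB V Cb Eb) (fun t => psq t * Real.sqrt t) := by
    show (wB V Cb Eb ∘ₗ awp V Cb Eb) ∘ₗ aw V Cb Eb = _
    rw [LinearMap.comp_assoc]
    congr 1
    exact opCal_comp _ (hAB V Cb Eb) psq Real.sqrt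
  rw [h1]
  exact R_comp_ind (wB V Cb Eb) (hAB V Cb Eb)

lemma U_aw_apply (z : Y') : Uc V Cb Eb (aw V Cb Eb z) = wB V Cb Eb z :=
  LinearMap.congr_fun (U_aw V Cb Eb) z

lemma norm_U_le (z : Y') : ‖Uc V Cb Eb z‖ ≤ ‖z‖ :=
  norm_R_psq_le (wB V Cb Eb) (hAB V Cb Eb) z

/-- `|V|²` -/
def BB : Y →ₗ[ℂ] Y := LinearMap.adjoint V ∘ₗ V

lemma hBB : (BB V).IsSymmetric := hRR V

noncomputable def aV : Y →ₗ[ℂ] Y := opCal (BB V) (hBB V) Real.sqrt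
noncomputable def aVp : Y →ₗ[ℂ] Y := opCal (BB V) (hBB V) psq
noncomputable def Wc : Y →ₗ[ℂ] X := V ∘ₗ aVp V

lemma norm_W_le (z : Y) : ‖Wc V z‖ ≤ ‖z‖ := norm_R_psq_le V (hBB V) z

lemma norm_aV (z : Y) : ‖aV V z‖ = ‖V z‖ := norm_opCal_sqrt V (hBB V) z

lemma adjW_V : LinearMap.adjoint (Wc V) ∘ₗ V = aV V := by
  have h1 : LinearMap.adjoint (Wc V) = aVp V ∘ₗ LinearMap.adjoint V := by
    show LinearMap.adjoint (V ∘ₗ aVp V) = _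
    rw [LinearMap.adjoint_comp]
    congr 1
    exact opCal_adjoint _ (hBB V) psq
  rw [h1, LinearMap.comp_assoc]
  exact psq_comp V (hBB V)

/-- P -/
noncomputable def Pc : Y →ₗ[ℂ] Y :=
  (Eb.symm : Y' →ₗ[ℂ] Y) ∘ₗ aw V Cb Eb ∘ₗ LinearMap.adjoint (Eb.symm : Y' →ₗ[ℂ] Y)

lemma hPc : (Pc V Cb Eb).IsSymmetric := by
  have h := sandwich_symm (aw V Cb Eb) (opCal_symm _ (hAB V Cb Eb) Real.sqrt)
    (LinearMap.adjoint (Eb.symm : Y' →ₗ[ℂ] Y))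
  rwa [LinearMap.adjoint_adjoint] at h

lemma aw_inner_nonneg (ξ : Y') : ⟪ξ, aw V Cb Eb ξ⟫
    = ((∑ i, Real.sqrt (ev _ (hAB V Cb Eb) i) * ‖⟪eb _ (hAB V Cb Eb) i, ξ⟫‖ ^ 2 : ℝ) : ℂ) :=
  inner_opCal_self _ (hAB V Cb Eb) Real.sqrt ξ

lemma evP_nonneg (i : Fin (Module.finrank ℂ Y)) : 0 ≤ ev _ (hPc V Cb Eb) i := by
  have h1 := ev_eq _ (hPc V Cb Eb) i
  set b := eb _ (hPc V Cb Eb) i with hb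
  set N := LinearMap.adjoint (Eb.symm : Y' →ₗ[ℂ] Y) with hN
  have h2 : ⟪b, Pc V Cb Eb b⟫ = ⟪N b, aw V Cb Eb (N b)⟫ := by
    show ⟪b, ((Eb.symm : Y' →ₗ[ℂ] Y) ∘ₗ aw V Cb Eb ∘ₗ N) b⟫ = _
    simp only [LinearMap.comp_apply]
    rw [← LinearMap.adjoint_inner_left (Eb.symm : Y' →ₗ[ℂ] Y)]
  rw [h2, aw_inner_nonneg] at h1
  have h3 := Complex.ofReal_injective h1
  rw [h3]
  positivity

noncomputable def Ph : Y →ₗ[ℂ] Y := opCal _ (hPc V Cb Eb) Real.sqrt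
noncomputable def Php : Y →ₗ[ℂ] Y := opCal _ (hPc V Cb Eb) psq

noncomputable def Gp : Y →ₗ[ℂ] X :=
  (Cb.symm : X' →ₗ[ℂ] X) ∘ₗ Uc V Cb Eb ∘ₗ (Eb : Y →ₗ[ℂ] Y')

noncomputable def Gh : Y →ₗ[ℂ] Y := LinearMap.adjoint (Wc V) ∘ₗ Gp V Cb Eb

lemma adjComp_id : LinearMap.adjoint (Eb : Y →ₗ[ℂ] Y')
    ∘ₗ LinearMap.adjoint (Eb.symm : Y' →ₗ[ℂ] Y) = LinearMap.id := by
  rw [← LinearMap.adjoint_comp]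
  have h1 : (Eb.symm : Y' →ₗ[ℂ] Y) ∘ₗ (Eb : Y →ₗ[ℂ] Y') = LinearMap.id := by
    ext z; simp
  rw [h1, adj_id]

lemma GpPc : Gp V Cb Eb ∘ₗ Pc V Cb Eb = V := by
  ext z
  simp only [Gp, Pc, LinearMap.comp_apply, LinearEquiv.coe_coe, LinearMap.id_coe, id_eq]
  rw [Eb.apply_symm_apply, U_aw_apply]
  show Cb.symm ((Cb : X →ₗ[ℂ] X') ((V ∘ₗ LinearMap.adjoint (Eb : Y →ₗ[ℂ] Y'))
    (LinearMap.adjoint (Eb.symm : Y' →ₗ[ℂ] Y) z))) = V z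
  simp only [LinearMap.comp_apply, LinearEquiv.coe_coe]
  rw [Cb.symm_apply_apply]
  congr 1
  exact LinearMap.congr_fun (adjComp_id Eb) z

lemma GhPc : Gh V Cb Eb ∘ₗ Pc V Cb Eb = aV V := by
  show (LinearMap.adjoint (Wc V) ∘ₗ Gp V Cb Eb) ∘ₗ Pc V Cb Eb = aV V
  rw [LinearMap.comp_assoc, GpPc, adjW_V]

lemma aV_eq_Pc_adjGh : aV V = Pc V Cb Eb ∘ₗ LinearMap.adjoint (Gh V Cb Eb) := by
  calc aV V = LinearMap.adjoint (aV V) := (opCal_adjoint _ (hBB V) Real.sqrt).symm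
    _ = LinearMap.adjoint (Gh V Cb Eb ∘ₗ Pc V Cb Eb) := by rw [GhPc]
    _ = LinearMap.adjoint (Pc V Cb Eb) ∘ₗ LinearMap.adjoint (Gh V Cb Eb) := by
        rw [LinearMap.adjoint_comp]
    _ = Pc V Cb Eb ∘ₗ LinearMap.adjoint (Gh V Cb Eb) := by
        rw [adj_eq_of_symm _ (hPc V Cb Eb)]

lemma indP_Pc : opCal _ (hPc V Cb Eb) (fun t => Real.sqrt t * psq t) ∘ₗ Pc V Cb Eb
    = Pc V Cb Eb := by
  refine onb_ext _ (hPc V Cb Eb) _ _ (fun i => ?_)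
  simp only [LinearMap.comp_apply]
  rw [T_eb _ (hPc V Cb Eb), map_smul, opCal_eb, smul_smul]
  congr 1
  rw [← Complex.ofReal_mul]
  congr 1
  by_cases h : ev _ (hPc V Cb Eb) i = 0
  · simp [h]
  · have hpos : 0 < ev _ (hPc V Cb Eb) i := lt_of_le_of_ne (evP_nonneg V Cb Eb i) (Ne.symm h)
    simp only [psq, if_neg h]
    rw [mul_inv_cancel₀ (ne_of_gt (Real.sqrt_pos.2 hpos))]
    ring

lemma PhPhp_aV : Ph V Cb Eb ∘ₗ (Php V Cb Eb ∘ₗ aV V) = aV V := by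
  have h1 : Ph V Cb Eb ∘ₗ Php V Cb Eb
      = opCal _ (hPc V Cb Eb) (fun t => Real.sqrt t * psq t) :=
    opCal_comp _ (hPc V Cb Eb) Real.sqrt psq
  rw [← LinearMap.comp_assoc, h1, aV_eq_Pc_adjGh V Cb Eb, ← LinearMap.comp_assoc, indP_Pc]

end Core2

end ProjAux


namespace ProjAux

section Core3

variable {X X' Y Y' : Type*}
  [NormedAddCommGroup X] [InnerProductSpace ℂ X] [FiniteDimensional ℂ X]
  [NormedAddCommGroup X'] [InnerProductSpace ℂ X'] [FiniteDimensional ℂ X']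
  [NormedAddCommGroup Y] [InnerProductSpace ℂ Y] [FiniteDimensional ℂ Y]
  [NormedAddCommGroup Y'] [InnerProductSpace ℂ Y'] [FiniteDimensional ℂ Y']

variable (V : Y →ₗ[ℂ] X) (Cb : X ≃ₗ[ℂ] X') (Eb : Y ≃ₗ[ℂ] Y')

/-- k4 : `Gh ∘ Ph = aV ∘ Php` -/
lemma GhPh : Gh V Cb Eb ∘ₗ Ph V Cb Eb = aV V ∘ₗ Php V Cb Eb := by
  refine onb_ext _ (hPc V Cb Eb) _ _ (fun i => ?_)
  have hb : aV V (eb _ (hPc V Cb Eb) i)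
      = ((ev _ (hPc V Cb Eb) i : ℝ) : ℂ) • Gh V Cb Eb (eb _ (hPc V Cb Eb) i) := by
    rw [← map_smul, ← T_eb _ (hPc V Cb Eb) i]
    exact (LinearMap.congr_fun (GhPc V Cb Eb) (eb _ (hPc V Cb Eb) i)).symm
  simp only [LinearMap.comp_apply, Ph, Php, opCal_eb, map_smul, hb, smul_smul]
  congr 1
  norm_cast
  by_cases h : ev _ (hPc V Cb Eb) i = 0
  · simp [h, psq]
  · have hpos : 0 < ev _ (hPc V Cb Eb) i := lt_of_le_of_ne (evP_nonneg V Cb Eb i) (Ne.symm h)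
    have hsp : 0 < Real.sqrt (ev _ (hPc V Cb Eb) i) := Real.sqrt_pos.2 hpos
    simp only [psq, if_neg h]
    rw [inv_mul_eq_div, eq_div_iff (ne_of_gt hsp)]
    exact (Real.mul_self_sqrt (le_of_lt hpos)).symm ▸ rfl

/-- k5 : `Gp ∘ Ph = V ∘ Php` -/
lemma GpPh : Gp V Cb Eb ∘ₗ Ph V Cb Eb = V ∘ₗ Php V Cb Eb := by
  refine onb_ext _ (hPc V Cb Eb) _ _ (fun i => ?_)
  have hb : V (eb _ (hPc V Cb Eb) i)
      = ((ev _ (hPc V Cb Eb) i : ℝ) : ℂ) • Gp V Cb Eb (eb _ (hPc V Cb Eb) i) := by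
    rw [← map_smul, ← T_eb _ (hPc V Cb Eb) i]
    exact (LinearMap.congr_fun (GpPc V Cb Eb) (eb _ (hPc V Cb Eb) i)).symm
  simp only [LinearMap.comp_apply, Ph, Php, opCal_eb, map_smul, hb, smul_smul]
  congr 1
  norm_cast
  by_cases h : ev _ (hPc V Cb Eb) i = 0
  · simp [h, psq]
  · have hpos : 0 < ev _ (hPc V Cb Eb) i := lt_of_le_of_ne (evP_nonneg V Cb Eb i) (Ne.symm h)
    have hsp : 0 < Real.sqrt (ev _ (hPc V Cb Eb) i) := Real.sqrt_pos.2 hpos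
    simp only [psq, if_neg h]
    rw [inv_mul_eq_div, eq_div_iff (ne_of_gt hsp)]
    exact (Real.mul_self_sqrt (le_of_lt hpos)).symm ▸ rfl

/-- the operator S -/
noncomputable def Sc : Y →ₗ[ℂ] Y := Php V Cb Eb ∘ₗ aV V ∘ₗ Php V Cb Eb

lemma hSc : (Sc V Cb Eb).IsSymmetric := by
  have h := sandwich_symm (aV V) (opCal_symm _ (hBB V) Real.sqrt) (Php V Cb Eb)
  rwa [show LinearMap.adjoint (Php V Cb Eb) = Php V Cb Eb from
    opCal_adjoint _ (hPc V Cb Eb) psq] at h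

lemma evS_nonneg (j : Fin (Module.finrank ℂ Y)) : 0 ≤ ev _ (hSc V Cb Eb) j := by
  have h1 := ev_eq _ (hSc V Cb Eb) j
  set b := eb _ (hSc V Cb Eb) j with hbdef
  have h2 : ⟪b, Sc V Cb Eb b⟫ = ⟪Php V Cb Eb b, aV V (Php V Cb Eb b)⟫ :=
    (opCal_symm _ (hPc V Cb Eb) psq b _).symm
  have h5 : ⟪Php V Cb Eb b, aV V (Php V Cb Eb b)⟫
      = ((∑ i, Real.sqrt (ev _ (hBB V) i) * ‖⟪eb _ (hBB V) i, Php V Cb Eb b⟫‖ ^ 2 : ℝ) : ℂ) :=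
    inner_opCal_self _ (hBB V) Real.sqrt _
  rw [h2, h5] at h1
  have h3 := Complex.ofReal_injective h1
  rw [h3]
  positivity

/-- the vectors -/
noncomputable def zeta (j : Fin (Module.finrank ℂ Y)) : Y :=
  Ph V Cb Eb (eb _ (hSc V Cb Eb) j)

noncomputable def ecc (j : Fin (Module.finrank ℂ Y)) : X := Gp V Cb Eb (zeta V Cb Eb j)

/-- k6 : representation -/
lemma rep_eq (z : Y) : ∑ j, ⟪zeta V Cb Eb j, z⟫ • ecc V Cb Eb j = V z := by
  have h1 : ∀ j, ⟪zeta V Cb Eb j, z⟫ = ⟪eb _ (hSc V Cb Eb) j, Ph V Cb Eb z⟫ := fun j =>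
    opCal_symm _ (hPc V Cb Eb) Real.sqrt _ _
  have h2 : ∑ j, ⟪zeta V Cb Eb j, z⟫ • ecc V Cb Eb j
      = Gp V Cb Eb (Ph V Cb Eb (∑ j, ⟪eb _ (hSc V Cb Eb) j, Ph V Cb Eb z⟫
          • eb _ (hSc V Cb Eb) j)) := by
    rw [map_sum, map_sum]
    refine Finset.sum_congr rfl (fun j _ => ?_)
    rw [h1, map_smul, map_smul]
    rfl
  rw [h2, OrthonormalBasis.sum_repr']
  have h3 : Ph V Cb Eb (Ph V Cb Eb z) = Pc V Cb Eb z := by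
    have h4 : Ph V Cb Eb ∘ₗ Ph V Cb Eb = Pc V Cb Eb := by
      rw [Ph, opCal_comp]
      refine (opCal_congr _ (hPc V Cb Eb) _ _ (fun i => ?_)).trans (opCal_id _ (hPc V Cb Eb))
      exact Real.mul_self_sqrt (evP_nonneg V Cb Eb i)
    exact LinearMap.congr_fun h4 z
  rw [h3]
  exact LinearMap.congr_fun (GpPc V Cb Eb) z

/-- k7 -/
lemma Gh_zeta (j : Fin (Module.finrank ℂ Y)) :
    Gh V Cb Eb (zeta V Cb Eb j) = ((ev _ (hSc V Cb Eb) j : ℝ) : ℂ) • zeta V Cb Eb j := by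
  have h1 : Gh V Cb Eb (zeta V Cb Eb j) = aV V (Php V Cb Eb (eb _ (hSc V Cb Eb) j)) :=
    LinearMap.congr_fun (GhPh V Cb Eb) (eb _ (hSc V Cb Eb) j)
  have h2 : ((ev _ (hSc V Cb Eb) j : ℝ) : ℂ) • zeta V Cb Eb j
      = Ph V Cb Eb (Sc V Cb Eb (eb _ (hSc V Cb Eb) j)) := by
    rw [T_eb _ (hSc V Cb Eb) j, map_smul]
    rfl
  rw [h1, h2]
  have h3 : Ph V Cb Eb (Sc V Cb Eb (eb _ (hSc V Cb Eb) j))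
      = Ph V Cb Eb (Php V Cb Eb (aV V (Php V Cb Eb (eb _ (hSc V Cb Eb) j)))) := rfl
  rw [h3]
  exact (LinearMap.congr_fun (PhPhp_aV V Cb Eb) (Php V Cb Eb (eb _ (hSc V Cb Eb) j))).symm ▸
    (LinearMap.congr_fun (PhPhp_aV V Cb Eb) (Php V Cb Eb (eb _ (hSc V Cb Eb) j)))

/-- k8 -/
lemma norm_ecc (j : Fin (Module.finrank ℂ Y)) :
    ‖ecc V Cb Eb j‖ = ev _ (hSc V Cb Eb) j * ‖zeta V Cb Eb j‖ := by
  have h1 : ecc V Cb Eb j = V (Php V Cb Eb (eb _ (hSc V Cb Eb) j)) :=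
    LinearMap.congr_fun (GpPh V Cb Eb) (eb _ (hSc V Cb Eb) j)
  have h2 : ‖V (Php V Cb Eb (eb _ (hSc V Cb Eb) j))‖
      = ‖aV V (Php V Cb Eb (eb _ (hSc V Cb Eb) j))‖ := (norm_aV V _).symm
  have h3 : aV V (Php V Cb Eb (eb _ (hSc V Cb Eb) j)) = Gh V Cb Eb (zeta V Cb Eb j) :=
    (LinearMap.congr_fun (GhPh V Cb Eb) (eb _ (hSc V Cb Eb) j)).symm
  rw [h1, h2, h3, Gh_zeta, norm_smul]
  congr 1
  rw [Complex.norm_real]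
  exact abs_of_nonneg (evS_nonneg V Cb Eb j)

/-- k9 -/
lemma align_W (j : Fin (Module.finrank ℂ Y)) :
    ⟪Wc V (zeta V Cb Eb j), ecc V Cb Eb j⟫
      = ((‖ecc V Cb Eb j‖ * ‖zeta V Cb Eb j‖ : ℝ) : ℂ) := by
  have h1 : ⟪Wc V (zeta V Cb Eb j), ecc V Cb Eb j⟫
      = ⟪zeta V Cb Eb j, LinearMap.adjoint (Wc V) (ecc V Cb Eb j)⟫ :=
    (LinearMap.adjoint_inner_right (Wc V) _ _).symm
  have h2 : LinearMap.adjoint (Wc V) (ecc V Cb Eb j) = Gh V Cb Eb (zeta V Cb Eb j) := rfl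
  rw [h1, h2, Gh_zeta, inner_smul_right, inner_self_ofReal, norm_ecc]
  rw [← Complex.ofReal_mul]
  congr 1
  ring

/-- k10 -/
lemma norm_U_Eb_zeta (j : Fin (Module.finrank ℂ Y)) :
    ‖Uc V Cb Eb (Eb (zeta V Cb Eb j))‖ = ‖Eb (zeta V Cb Eb j)‖ := by
  have h0 : Ph V Cb Eb = Pc V Cb Eb ∘ₗ Php V Cb Eb := by
    conv_rhs => rw [show Pc V Cb Eb = opCal _ (hPc V Cb Eb) (fun t => t) from
      (opCal_id _ (hPc V Cb Eb)).symm]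
    rw [Php, opCal_comp]
    refine opCal_congr _ (hPc V Cb Eb) _ _ (fun i => ?_)
    by_cases h : ev _ (hPc V Cb Eb) i = 0
    · simp [h, psq]
    · have hpos : 0 < ev _ (hPc V Cb Eb) i := lt_of_le_of_ne (evP_nonneg V Cb Eb i) (Ne.symm h)
      simp only [psq, if_neg h]
      rw [mul_comm, inv_mul_eq_div, Real.div_sqrt]
  set h := LinearMap.adjoint (Eb.symm : Y' →ₗ[ℂ] Y) (Php V Cb Eb (eb _ (hSc V Cb Eb) j))
    with hh
  have h1 : Eb (zeta V Cb Eb j) = aw V Cb Eb h := by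
    show Eb (Ph V Cb Eb (eb _ (hSc V Cb Eb) j)) = _
    rw [h0]
    show Eb (Pc V Cb Eb (Php V Cb Eb (eb _ (hSc V Cb Eb) j))) = _
    simp only [Pc, LinearMap.comp_apply, LinearEquiv.coe_coe]
    rw [Eb.apply_symm_apply]
  rw [h1, U_aw_apply, norm_aw]

/-- k11 -/
lemma align_U (j : Fin (Module.finrank ℂ Y)) :
    ⟪Uc V Cb Eb (Eb (zeta V Cb Eb j)), Cb (ecc V Cb Eb j)⟫
      = ((‖Cb (ecc V Cb Eb j)‖ * ‖Eb (zeta V Cb Eb j)‖ : ℝ) : ℂ) := by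
  have h1 : Cb (ecc V Cb Eb j) = Uc V Cb Eb (Eb (zeta V Cb Eb j)) := by
    show Cb (Gp V Cb Eb (zeta V Cb Eb j)) = _
    simp only [Gp, LinearMap.comp_apply, LinearEquiv.coe_coe]
    rw [Cb.apply_symm_apply]
  rw [h1, inner_self_ofReal, ← norm_U_Eb_zeta]
  norm_cast
  ring

/-- The packaged core construction. -/
lemma core : ∃ (n : ℕ) (e : Fin n → X) (ζ : Fin n → Y),
    (∀ z : Y, ∑ j, ⟪ζ j, z⟫ • e j = V z) ∧
    (∃ W : Y →ₗ[ℂ] X, (∀ z, ‖W z‖ ≤ ‖z‖) ∧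
      ∀ j, ⟪W (ζ j), e j⟫ = ((‖e j‖ * ‖ζ j‖ : ℝ) : ℂ)) ∧
    (∃ U : Y' →ₗ[ℂ] X', (∀ z, ‖U z‖ ≤ ‖z‖) ∧
      ∀ j, ⟪U (Eb (ζ j)), Cb (e j)⟫ = ((‖Cb (e j)‖ * ‖Eb (ζ j)‖ : ℝ) : ℂ)) := by
  refine ⟨Module.finrank ℂ Y, ecc V Cb Eb, zeta V Cb Eb, rep_eq V Cb Eb, ?_, ?_⟩
  · exact ⟨Wc V, norm_W_le V, align_W V Cb Eb⟩
  · exact ⟨Uc V Cb Eb, norm_U_le V Cb Eb, align_U V Cb Eb⟩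

end Core3

end ProjAux


namespace ProjAux

section ConjE

/-- coordinatewise conjugation on Euclidean space -/
def conjE {n : ℕ} (z : EuclideanSpace ℂ (Fin n)) : EuclideanSpace ℂ (Fin n) :=
  WithLp.toLp 2 (fun i => starRingEnd ℂ (z i))

@[simp] lemma conjE_apply {n : ℕ} (z : EuclideanSpace ℂ (Fin n)) (i : Fin n) :
    conjE z i = starRingEnd ℂ (z i) := rfl

lemma conjE_add {n : ℕ} (a b : EuclideanSpace ℂ (Fin n)) :
    conjE (a + b) = conjE a + conjE b := by
  ext i
  simp [conjE]

lemma conjE_smul {n : ℕ} (c : ℂ) (a : EuclideanSpace ℂ (Fin n)) :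
    conjE (c • a) = (starRingEnd ℂ c) • conjE a := by
  ext i
  simp [conjE]

@[simp] lemma conjE_conjE {n : ℕ} (a : EuclideanSpace ℂ (Fin n)) : conjE (conjE a) = a := by
  ext i
  simp [conjE]

@[simp] lemma norm_conjE {n : ℕ} (a : EuclideanSpace ℂ (Fin n)) : ‖conjE a‖ = ‖a‖ := by
  rw [EuclideanSpace.norm_eq, EuclideanSpace.norm_eq]
  congr 1
  refine Finset.sum_congr rfl (fun i _ => ?_)
  simp [conjE]

end ConjE

end ProjAux


namespace ProjAux

section ConjLE

/-- conjugated linear equiv -/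
def conjLE {n m : ℕ} (A : EuclideanSpace ℂ (Fin n) ≃ₗ[ℂ] EuclideanSpace ℂ (Fin m)) :
    EuclideanSpace ℂ (Fin n) ≃ₗ[ℂ] EuclideanSpace ℂ (Fin m) where
  toFun z := conjE (A (conjE z))
  invFun z := conjE (A.symm (conjE z))
  map_add' a b := by
    show conjE (A (conjE (a + b))) = conjE (A (conjE a)) + conjE (A (conjE b))
    rw [conjE_add, map_add, conjE_add]
  map_smul' c a := by
    show conjE (A (conjE (c • a))) = (RingHom.id ℂ) c • conjE (A (conjE a))
    rw [conjE_smul, map_smul, conjE_smul, RingHom.id_apply, Complex.conj_conj]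
  left_inv a := by simp
  right_inv a := by simp

@[simp] lemma conjLE_apply {n m : ℕ} (A : EuclideanSpace ℂ (Fin n) ≃ₗ[ℂ] EuclideanSpace ℂ (Fin m))
    (z : EuclideanSpace ℂ (Fin n)) : conjLE A z = conjE (A (conjE z)) := rfl

@[simp] lemma norm_conjLE {n m : ℕ} (A : EuclideanSpace ℂ (Fin n) ≃ₗ[ℂ] EuclideanSpace ℂ (Fin m))
    (z : EuclideanSpace ℂ (Fin n)) : ‖conjLE A z‖ = ‖A (conjE z)‖ := by
  rw [conjLE_apply, norm_conjE]

end ConjLE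

section Lam

variable {H K : Type*} [NormedAddCommGroup H] [InnerProductSpace ℂ H]
  [NormedAddCommGroup K] [InnerProductSpace ℂ K]
variable {p q : ℕ} (E : Submodule ℂ H) (F : Submodule ℂ K)
  [Submodule.HasOrthogonalProjection E] [Submodule.HasOrthogonalProjection F]
variable (φE : E ≃ₗᵢ[ℂ] EuclideanSpace ℂ (Fin p)) (φF : F ≃ₗᵢ[ℂ] EuclideanSpace ℂ (Fin q))
variable (W : EuclideanSpace ℂ (Fin q) →ₗ[ℂ] EuclideanSpace ℂ (Fin p))

/-- the auxiliary bounded bilinear functional -/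
noncomputable def lam : H →ₗ[ℂ] K →ₗ[ℂ] ℂ :=
  LinearMap.mk₂ ℂ
    (fun xx yy => ⟪W (conjE (φF (Submodule.orthogonalProjection F yy))), φE (Submodule.orthogonalProjection E xx)⟫)
    (fun x₁ x₂ y => by
      rw [map_add, map_add, inner_add_right])
    (fun c x y => by
      rw [map_smul, map_smul, inner_smul_right, smul_eq_mul])
    (fun x y₁ y₂ => by
      rw [map_add, map_add, conjE_add, map_add, inner_add_left])
    (fun c x y => by
      rw [map_smul, map_smul, conjE_smul, map_smul, inner_smul_left, Complex.conj_conj,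
        smul_eq_mul])

lemma lam_apply (xx : H) (yy : K) : lam E F φE φF W xx yy
    = ⟪W (conjE (φF (Submodule.orthogonalProjection F yy))), φE (Submodule.orthogonalProjection E xx)⟫ := rfl

lemma lam_bound (hW : ∀ z, ‖W z‖ ≤ ‖z‖) (xx : H) (yy : K) :
    ‖lam E F φE φF W xx yy‖ ≤ ‖xx‖ * ‖yy‖ := by
  rw [lam_apply]
  refine le_trans (norm_inner_le_norm _ _) ?_
  have h1 : ‖W (conjE (φF (Submodule.orthogonalProjection F yy)))‖ ≤ ‖yy‖ := by
    refine le_trans (hW _) ?_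
    rw [norm_conjE, LinearIsometryEquiv.norm_map]
    calc ‖Submodule.orthogonalProjection F yy‖ ≤ ‖Submodule.orthogonalProjection F‖ * ‖yy‖ :=
          (Submodule.orthogonalProjection F).le_opNorm yy
      _ ≤ 1 * ‖yy‖ := by
          have := Submodule.orthogonalProjection_norm_le F
          have h2 : (0:ℝ) ≤ ‖yy‖ := norm_nonneg yy
          nlinarith [norm_nonneg (Submodule.orthogonalProjection F)]
      _ = ‖yy‖ := one_mul _
  have h2 : ‖φE (Submodule.orthogonalProjection E xx)‖ ≤ ‖xx‖ := by
    rw [LinearIsometryEquiv.norm_map]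
    calc ‖Submodule.orthogonalProjection E xx‖ ≤ ‖Submodule.orthogonalProjection E‖ * ‖xx‖ :=
          (Submodule.orthogonalProjection E).le_opNorm xx
      _ ≤ 1 * ‖xx‖ := by
          have := Submodule.orthogonalProjection_norm_le E
          nlinarith [norm_nonneg (Submodule.orthogonalProjection E), norm_nonneg xx]
      _ = ‖xx‖ := one_mul _
  calc ‖W (conjE (φF (Submodule.orthogonalProjection F yy)))‖ * ‖φE (Submodule.orthogonalProjection E xx)‖
      ≤ ‖yy‖ * ‖xx‖ := by
        refine mul_le_mul h1 h2 (norm_nonneg _) (norm_nonneg _)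
    _ = ‖xx‖ * ‖yy‖ := mul_comm _ _

end Lam

end ProjAux


namespace ProjAux

set_option maxHeartbeats 1000000 in
theorem key
    {H K : Type*} [NormedAddCommGroup H] [InnerProductSpace ℂ H] [CompleteSpace H]
    [NormedAddCommGroup K] [InnerProductSpace ℂ K] [CompleteSpace K]
    (C : H →L[ℂ] H) (D : K →L[ℂ] K) (hC : IsUnit C) (hD : IsUnit D)
    (u : H →ₗ[ℂ] K →ₗ[ℂ] ℂ)
    (hu : ∀ (x : H) (y : K), ‖u x y‖ ≤ ‖x‖ * ‖y‖ + ‖C x‖ * ‖D y‖)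
    (m : ℕ) (x : Fin m → H) (y : Fin m → K)
    (m₁ : ℕ) (a : Fin m₁ → H) (b : Fin m₁ → K)
    (hab : (∑ i, x i ⊗ₜ[ℂ] y i) = ∑ j, a j ⊗ₜ[ℂ] b j)
    (m₂ : ℕ) (c : Fin m₂ → H) (d : Fin m₂ → K)
    (hcd : (∑ i, C (x i) ⊗ₜ[ℂ] D (y i)) = ∑ j, c j ⊗ₜ[ℂ] d j) :
    ‖∑ i, u (x i) (y i)‖ ≤ (∑ j, ‖a j‖ * ‖b j‖) + (∑ j, ‖c j‖ * ‖d j‖) := by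
  classical
  -- injectivity of C and D
  have hCinj : Function.Injective (⇑C) := by
    intro z₁ z₂ hz
    have h3 := congrArg (fun (f : H →L[ℂ] H) => f z₁) hC.unit.inv_mul
    have h4 := congrArg (fun (f : H →L[ℂ] H) => f z₂) hC.unit.inv_mul
    simp only [ContinuousLinearMap.mul_apply, ContinuousLinearMap.one_apply,
      IsUnit.unit_spec] at h3 h4
    rw [← h3, ← h4, hz]
  have hDinj : Function.Injective (⇑D) := by
    intro z₁ z₂ hz
    have h3 := congrArg (fun (f : K →L[ℂ] K) => f z₁) hD.unit.inv_mul
    have h4 := congrArg (fun (f : K →L[ℂ] K) => f z₂) hD.unit.inv_mul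
    simp only [ContinuousLinearMap.mul_apply, ContinuousLinearMap.one_apply,
      IsUnit.unit_spec] at h3 h4
    rw [← h3, ← h4, hz]
  -- subspaces
  set E : Submodule ℂ H := Submodule.span ℂ (Set.range x) with hE
  set F : Submodule ℂ K := Submodule.span ℂ (Set.range y) with hF
  haveI : FiniteDimensional ℂ E := FiniteDimensional.span_of_finite ℂ (Set.finite_range x)
  haveI : FiniteDimensional ℂ F := FiniteDimensional.span_of_finite ℂ (Set.finite_range y)
  set E' : Submodule ℂ H := E.map (C : H →ₗ[ℂ] H) with hE'
  set F' : Submodule ℂ K := F.map (D : K →ₗ[ℂ] K) with hF'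
  haveI : FiniteDimensional ℂ E' := Module.Finite.map E (C : H →ₗ[ℂ] H)
  haveI : FiniteDimensional ℂ F' := Module.Finite.map F (D : K →ₗ[ℂ] K)
  -- restricted equivalences
  have hmapC : ∀ z ∈ E, (C : H →ₗ[ℂ] H) z ∈ E' := fun z hz => Submodule.mem_map_of_mem hz
  have hmapD : ∀ z ∈ F, (D : K →ₗ[ℂ] K) z ∈ F' := fun z hz => Submodule.mem_map_of_mem hz
  set Cres : E →ₗ[ℂ] E' := (C : H →ₗ[ℂ] H).restrict hmapC with hCres
  set Dres : F →ₗ[ℂ] F' := (D : K →ₗ[ℂ] K).restrict hmapD with hDres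
  have hCresinj : Function.Injective Cres := by
    intro z₁ z₂ hz
    have h1 : C (z₁ : H) = C (z₂ : H) := congrArg Subtype.val hz
    exact Subtype.ext (hCinj h1)
  have hCressurj : Function.Surjective Cres := by
    rintro ⟨w, hw⟩
    rw [hE', Submodule.mem_map] at hw
    obtain ⟨z, hz, rfl⟩ := hw
    exact ⟨⟨z, hz⟩, rfl⟩
  have hDresinj : Function.Injective Dres := by
    intro z₁ z₂ hz
    have h1 : D (z₁ : K) = D (z₂ : K) := congrArg Subtype.val hz
    exact Subtype.ext (hDinj h1)
  have hDressurj : Function.Surjective Dres := by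
    rintro ⟨w, hw⟩
    rw [hF', Submodule.mem_map] at hw
    obtain ⟨z, hz, rfl⟩ := hw
    exact ⟨⟨z, hz⟩, rfl⟩
  set CresE : E ≃ₗ[ℂ] E' := LinearEquiv.ofBijective Cres ⟨hCresinj, hCressurj⟩ with hCresE
  set DresE : F ≃ₗ[ℂ] F' := LinearEquiv.ofBijective Dres ⟨hDresinj, hDressurj⟩ with hDresE
  -- orthonormal bases
  set pp := Module.finrank ℂ E with hpp
  set qq := Module.finrank ℂ F with hqq
  set pp' := Module.finrank ℂ E' with hpp'
  set qq' := Module.finrank ℂ F' with hqq'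
  set φE : E ≃ₗᵢ[ℂ] EuclideanSpace ℂ (Fin pp) := (stdOrthonormalBasis ℂ E).repr with hφE
  set φF : F ≃ₗᵢ[ℂ] EuclideanSpace ℂ (Fin qq) := (stdOrthonormalBasis ℂ F).repr with hφF
  set φE' : E' ≃ₗᵢ[ℂ] EuclideanSpace ℂ (Fin pp') := (stdOrthonormalBasis ℂ E').repr with hφE'
  set φF' : F' ≃ₗᵢ[ℂ] EuclideanSpace ℂ (Fin qq') := (stdOrthonormalBasis ℂ F').repr with hφF'
  -- memberships
  have hxE : ∀ i, x i ∈ E := fun i => Submodule.subset_span ⟨i, rfl⟩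
  have hyF : ∀ i, y i ∈ F := fun i => Submodule.subset_span ⟨i, rfl⟩
  -- euclidean vectors
  set xe : Fin m → EuclideanSpace ℂ (Fin pp) := fun i => φE ⟨x i, hxE i⟩ with hxe
  set ye : Fin m → EuclideanSpace ℂ (Fin qq) := fun i => φF ⟨y i, hyF i⟩ with hye
  -- the operator V and the transported equivs
  set Vop : EuclideanSpace ℂ (Fin qq) →ₗ[ℂ] EuclideanSpace ℂ (Fin pp) :=
    ∑ i, rk1 (xe i) (conjE (ye i)) with hVop
  set CbE : EuclideanSpace ℂ (Fin pp) ≃ₗ[ℂ] EuclideanSpace ℂ (Fin pp') :=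
    (φE.toLinearEquiv.symm.trans CresE).trans φE'.toLinearEquiv with hCbE
  set DbE : EuclideanSpace ℂ (Fin qq) ≃ₗ[ℂ] EuclideanSpace ℂ (Fin qq') :=
    (φF.toLinearEquiv.symm.trans DresE).trans φF'.toLinearEquiv with hDbE
  set EbE : EuclideanSpace ℂ (Fin qq) ≃ₗ[ℂ] EuclideanSpace ℂ (Fin qq') := conjLE DbE with hEbE
  -- core construction
  obtain ⟨n, eE, ζ, hrep, ⟨Wℓ, hWle, hWal⟩, ⟨Uℓ, hUle, hUal⟩⟩ := core Vop CbE EbE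
  -- the Hilbert space vectors
  set eH : Fin n → H := fun j => ((φE.symm (eE j) : E) : H) with heH
  set fH : Fin n → K := fun j => ((φF.symm (conjE (ζ j)) : F) : K) with hfH
  -- coordinates identity
  have hco : ∀ (k : Fin pp) (l : Fin qq),
      ∑ i, (xe i) k * (ye i) l = ∑ j, (eE j) k * (conjE (ζ j)) l := by
    intro k l
    have h1 := hrep (EuclideanSpace.single l 1)
    have h2 := congrArg (fun w => ⟪EuclideanSpace.single k (1:ℂ), w⟫) h1
    simp only [hVop, LinearMap.sum_apply, rk1_apply, inner_sum, inner_smul_right,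
      EuclideanSpace.inner_single_left, EuclideanSpace.inner_single_right, map_one, one_mul,
      conjE_apply, Complex.conj_conj] at h2
    calc ∑ i, (xe i) k * (ye i) l = ∑ i, (ye i) l * (xe i) k :=
          Finset.sum_congr rfl (fun i _ => mul_comm _ _)
      _ = ∑ j, (starRingEnd ℂ) ((ζ j) l) * (eE j) k := h2.symm
      _ = ∑ j, (eE j) k * (conjE (ζ j)) l :=
          Finset.sum_congr rfl (fun j _ => by rw [conjE_apply, mul_comm])
  -- Euclidean tensor equality
  have hT1E : (∑ i, xe i ⊗ₜ[ℂ] ye i :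
        EuclideanSpace ℂ (Fin pp) ⊗[ℂ] EuclideanSpace ℂ (Fin qq))
      = ∑ j, eE j ⊗ₜ[ℂ] conjE (ζ j) := by
    apply ((EuclideanSpace.basisFun (Fin pp) ℂ).toBasis.tensorProduct
      (EuclideanSpace.basisFun (Fin qq) ℂ).toBasis).repr.injective
    refine Finsupp.ext (fun kl => ?_)
    obtain ⟨k, l⟩ := kl
    rw [map_sum, map_sum, Finsupp.finset_sum_apply, Finsupp.finset_sum_apply]
    simp only [Module.Basis.tensorProduct_repr_tmul_apply, OrthonormalBasis.coe_toBasis_repr_apply,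
      EuclideanSpace.basisFun_repr, smul_eq_mul]
    calc ∑ i, (ye i) l * (xe i) k = ∑ i, (xe i) k * (ye i) l :=
          Finset.sum_congr rfl (fun i _ => mul_comm _ _)
      _ = ∑ j, (eE j) k * (conjE (ζ j)) l := hco k l
      _ = ∑ j, (conjE (ζ j)) l * (eE j) k :=
          Finset.sum_congr rfl (fun j _ => mul_comm _ _)
  -- transport to H ⊗ K
  set ΨE : EuclideanSpace ℂ (Fin pp) →ₗ[ℂ] H :=
    E.subtype ∘ₗ (φE.symm.toLinearEquiv : EuclideanSpace ℂ (Fin pp) ≃ₗ[ℂ] E).toLinearMap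
    with hΨE
  set ΨF : EuclideanSpace ℂ (Fin qq) →ₗ[ℂ] K :=
    F.subtype ∘ₗ (φF.symm.toLinearEquiv : EuclideanSpace ℂ (Fin qq) ≃ₗ[ℂ] F).toLinearMap
    with hΨF
  have hT1H : (∑ i, x i ⊗ₜ[ℂ] y i) = ∑ j, eH j ⊗ₜ[ℂ] fH j := by
    have h3 := congrArg (TensorProduct.map ΨE ΨF) hT1E
    rw [map_sum, map_sum] at h3
    simp only [TensorProduct.map_tmul, hΨE, hΨF, LinearMap.comp_apply,
      LinearEquiv.coe_coe, LinearIsometryEquiv.coe_toLinearEquiv,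
      LinearIsometryEquiv.symm_apply_apply, Submodule.coe_subtype, hxe, hye] at h3
    exact h3
  -- completeness instances
  haveI : CompleteSpace E := FiniteDimensional.complete ℂ E
  haveI : CompleteSpace F := FiniteDimensional.complete ℂ F
  haveI : CompleteSpace E' := FiniteDimensional.complete ℂ E'
  haveI : CompleteSpace F' := FiniteDimensional.complete ℂ F'
  -- projection identities
  have hprojE : ∀ j, Submodule.orthogonalProjection E (eH j) = φE.symm (eE j) := fun j =>
    Subtype.ext (Submodule.starProjection_eq_self_iff.mpr (φE.symm (eE j)).2)
  have hprojF : ∀ j, Submodule.orthogonalProjection F (fH j) = φF.symm (conjE (ζ j)) := fun j =>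
    Subtype.ext (Submodule.starProjection_eq_self_iff.mpr (φF.symm (conjE (ζ j))).2)
  have hmemE' : ∀ j, C (eH j) ∈ E' := fun j =>
    Submodule.mem_map_of_mem (φE.symm (eE j)).2
  have hmemF' : ∀ j, D (fH j) ∈ F' := fun j =>
    Submodule.mem_map_of_mem (φF.symm (conjE (ζ j))).2
  have hCresCoe : ∀ z : E, ((CresE z : E') : H) = C (z : H) := fun z => rfl
  have hDresCoe : ∀ z : F, ((DresE z : F') : K) = D (z : K) := fun z => rfl
  have hprojE' : ∀ j, Submodule.orthogonalProjection E' (C (eH j)) = CresE (φE.symm (eE j)) := by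
    intro j
    refine Subtype.ext ?_
    rw [hCresCoe]
    exact Submodule.starProjection_eq_self_iff.mpr (hmemE' j)
  have hprojF' : ∀ j, Submodule.orthogonalProjection F' (D (fH j)) = DresE (φF.symm (conjE (ζ j))) := by
    intro j
    refine Subtype.ext ?_
    rw [hDresCoe]
    exact Submodule.starProjection_eq_self_iff.mpr (hmemF' j)
  -- norms
  have hnormeH : ∀ j, ‖eH j‖ = ‖eE j‖ := fun j =>
    (Submodule.coe_norm _).symm.trans (φE.symm.norm_map (eE j))
  have hnormfH : ∀ j, ‖fH j‖ = ‖ζ j‖ := fun j =>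
    ((Submodule.coe_norm _).symm.trans (φF.symm.norm_map (conjE (ζ j)))).trans
      (norm_conjE (ζ j))
  have hCbapp : ∀ j, CbE (eE j) = φE' (CresE (φE.symm (eE j))) := by
    intro j
    rw [hCbE]
    simp only [LinearEquiv.trans_apply, LinearIsometryEquiv.coe_toLinearEquiv]
    rfl
  have hDbapp : ∀ ξ, DbE ξ = φF' (DresE (φF.symm ξ)) := by
    intro ξ
    rw [hDbE]
    simp only [LinearEquiv.trans_apply, LinearIsometryEquiv.coe_toLinearEquiv]
    rfl
  have hnormCeH : ∀ j, ‖C (eH j)‖ = ‖CbE (eE j)‖ := by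
    intro j
    rw [hCbapp j, LinearIsometryEquiv.norm_map, Submodule.coe_norm, hCresCoe]
  have hnormDfH : ∀ j, ‖D (fH j)‖ = ‖EbE (ζ j)‖ := by
    intro j
    rw [hEbE, norm_conjLE, hDbapp, LinearIsometryEquiv.norm_map, Submodule.coe_norm, hDresCoe]
  -- lam values on the good representation
  have hval1 : ∀ j, lam E F φE φF Wℓ (eH j) (fH j) = ((‖eH j‖ * ‖fH j‖ : ℝ) : ℂ) := by
    intro j
    rw [lam_apply, hprojE j, hprojF j, LinearIsometryEquiv.apply_symm_apply,
      LinearIsometryEquiv.apply_symm_apply, conjE_conjE, hWal j, hnormeH j, hnormfH j]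
  have hval2 : ∀ j, lam E' F' φE' φF' Uℓ (C (eH j)) (D (fH j))
      = ((‖C (eH j)‖ * ‖D (fH j)‖ : ℝ) : ℂ) := by
    intro j
    rw [lam_apply, hprojE' j, hprojF' j, ← hDbapp (conjE (ζ j)), ← hCbapp j]
    have hEb : conjE (DbE (conjE (ζ j))) = EbE (ζ j) := by rw [hEbE]; rfl
    rw [hEb, hUal j, hnormCeH j, hnormDfH j]
  -- second tensor identity
  have hT2H : (∑ i, C (x i) ⊗ₜ[ℂ] D (y i)) = ∑ j, C (eH j) ⊗ₜ[ℂ] D (fH j) := by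
    have h3 := congrArg (TensorProduct.map (C : H →ₗ[ℂ] H) (D : K →ₗ[ℂ] K)) hT1H
    rw [map_sum, map_sum] at h3
    simpa only [TensorProduct.map_tmul, ContinuousLinearMap.coe_coe] using h3
  -- cost 1 bound
  have hb1 : (∑ j, ‖eH j‖ * ‖fH j‖) ≤ ∑ j, ‖a j‖ * ‖b j‖ := by
    have hnn : (0:ℝ) ≤ ∑ j, ‖eH j‖ * ‖fH j‖ :=
      Finset.sum_nonneg (fun j _ => mul_nonneg (norm_nonneg _) (norm_nonneg _))
    have hsum1 : TensorProduct.lift (lam E F φE φF Wℓ) (∑ i, x i ⊗ₜ[ℂ] y i)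
        = ((∑ j, ‖eH j‖ * ‖fH j‖ : ℝ) : ℂ) := by
      rw [hT1H, map_sum, Complex.ofReal_sum]
      exact Finset.sum_congr rfl (fun j _ => by rw [TensorProduct.lift.tmul, hval1 j])
    have hsum1' : TensorProduct.lift (lam E F φE φF Wℓ) (∑ i, x i ⊗ₜ[ℂ] y i)
        = ∑ j, lam E F φE φF Wℓ (a j) (b j) := by
      rw [hab, map_sum]
      exact Finset.sum_congr rfl (fun j _ => TensorProduct.lift.tmul _ _)
    have h5 : (∑ j, ‖eH j‖ * ‖fH j‖)
        = ‖TensorProduct.lift (lam E F φE φF Wℓ) (∑ i, x i ⊗ₜ[ℂ] y i)‖ := by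
      rw [hsum1, Complex.norm_real, Real.norm_eq_abs, abs_of_nonneg hnn]
    rw [h5, hsum1']
    refine le_trans (norm_sum_le _ _) (Finset.sum_le_sum (fun j _ => ?_))
    exact lam_bound E F φE φF Wℓ hWle (a j) (b j)
  -- cost 2 bound
  have hb2 : (∑ j, ‖C (eH j)‖ * ‖D (fH j)‖) ≤ ∑ j, ‖c j‖ * ‖d j‖ := by
    have hnn : (0:ℝ) ≤ ∑ j, ‖C (eH j)‖ * ‖D (fH j)‖ :=
      Finset.sum_nonneg (fun j _ => mul_nonneg (norm_nonneg _) (norm_nonneg _))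
    have hsum2 : TensorProduct.lift (lam E' F' φE' φF' Uℓ) (∑ i, C (x i) ⊗ₜ[ℂ] D (y i))
        = ((∑ j, ‖C (eH j)‖ * ‖D (fH j)‖ : ℝ) : ℂ) := by
      rw [hT2H, map_sum, Complex.ofReal_sum]
      exact Finset.sum_congr rfl (fun j _ => by rw [TensorProduct.lift.tmul, hval2 j])
    have hsum2' : TensorProduct.lift (lam E' F' φE' φF' Uℓ) (∑ i, C (x i) ⊗ₜ[ℂ] D (y i))
        = ∑ j, lam E' F' φE' φF' Uℓ (c j) (d j) := by
      rw [hcd, map_sum]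
      exact Finset.sum_congr rfl (fun j _ => TensorProduct.lift.tmul _ _)
    have h5 : (∑ j, ‖C (eH j)‖ * ‖D (fH j)‖)
        = ‖TensorProduct.lift (lam E' F' φE' φF' Uℓ) (∑ i, C (x i) ⊗ₜ[ℂ] D (y i))‖ := by
      rw [hsum2, Complex.norm_real, Real.norm_eq_abs, abs_of_nonneg hnn]
    rw [h5, hsum2']
    refine le_trans (norm_sum_le _ _) (Finset.sum_le_sum (fun j _ => ?_))
    exact lam_bound E' F' φE' φF' Uℓ hUle (c j) (d j)
  -- final chain
  have hfin1 : (∑ i, u (x i) (y i)) = ∑ j, u (eH j) (fH j) := by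
    have h4 := congrArg (TensorProduct.lift u) hT1H
    rw [map_sum, map_sum] at h4
    simpa only [TensorProduct.lift.tmul] using h4
  calc ‖∑ i, u (x i) (y i)‖ = ‖∑ j, u (eH j) (fH j)‖ := by rw [hfin1]
    _ ≤ ∑ j, ‖u (eH j) (fH j)‖ := norm_sum_le _ _
    _ ≤ ∑ j, (‖eH j‖ * ‖fH j‖ + ‖C (eH j)‖ * ‖D (fH j)‖) :=
        Finset.sum_le_sum (fun j _ => hu _ _)
    _ = (∑ j, ‖eH j‖ * ‖fH j‖) + (∑ j, ‖C (eH j)‖ * ‖D (fH j)‖) := Finset.sum_add_distrib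
    _ ≤ (∑ j, ‖a j‖ * ‖b j‖) + (∑ j, ‖c j‖ * ‖d j‖) := add_le_add hb1 hb2

end ProjAux


/-- If `C ∈ B(H)`, `D ∈ B(K)` are invertible and a bilinear form `u` satisfies
`|u(x,y)| ≤ ‖x‖‖y‖ + ‖Cx‖‖Dy‖`, then for any finite families `x₁,…,x_m` and `y₁,…,y_m`
one has `|Σᵢ u(xᵢ,yᵢ)| ≤ ‖Σᵢ xᵢ ⊗ yᵢ‖_π + ‖Σᵢ Cxᵢ ⊗ Dyᵢ‖_π`. -/
theorem abs_sum_le_projNorm_add_projNorm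
    {H K : Type*} [NormedAddCommGroup H] [InnerProductSpace ℂ H] [CompleteSpace H]
    [NormedAddCommGroup K] [InnerProductSpace ℂ K] [CompleteSpace K]
    (C : H →L[ℂ] H) (D : K →L[ℂ] K) (hC : IsUnit C) (hD : IsUnit D)
    (u : H →ₗ[ℂ] K →ₗ[ℂ] ℂ)
    (hu : ∀ (x : H) (y : K), ‖u x y‖ ≤ ‖x‖ * ‖y‖ + ‖C x‖ * ‖D y‖)
    (m : ℕ) (x : Fin m → H) (y : Fin m → K) :
    ‖∑ i, u (x i) (y i)‖ ≤
      projNorm (∑ i, x i ⊗ₜ[ℂ] y i) + projNorm (∑ i, C (x i) ⊗ₜ[ℂ] D (y i)) := by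
  simp only [projNorm]
  set S1 : Set ℝ := { r : ℝ | ∃ (m' : ℕ) (x' : Fin m' → H) (y' : Fin m' → K),
    (∑ i, x i ⊗ₜ[ℂ] y i) = ∑ i, x' i ⊗ₜ[ℂ] y' i ∧ r = ∑ i, ‖x' i‖ * ‖y' i‖ } with hS1
  set S2 : Set ℝ := { r : ℝ | ∃ (m' : ℕ) (x' : Fin m' → H) (y' : Fin m' → K),
    (∑ i, C (x i) ⊗ₜ[ℂ] D (y i)) = ∑ i, x' i ⊗ₜ[ℂ] y' i ∧ r = ∑ i, ‖x' i‖ * ‖y' i‖ } with hS2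
  have hkey : ∀ r₁ ∈ S1, ∀ r₂ ∈ S2, ‖∑ i, u (x i) (y i)‖ ≤ r₁ + r₂ := by
    rintro r₁ ⟨m₁, a, b, hab, rfl⟩ r₂ ⟨m₂, c, d, hcd, rfl⟩
    exact ProjAux.key C D hC hD u hu m x y m₁ a b hab m₂ c d hcd
  have hne1 : S1.Nonempty := ⟨∑ i, ‖x i‖ * ‖y i‖, m, x, y, rfl, rfl⟩
  have hne2 : S2.Nonempty :=
    ⟨∑ i, ‖C (x i)‖ * ‖D (y i)‖, m, fun i => C (x i), fun i => D (y i), rfl, rfl⟩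
  have h2 : ∀ r₁ ∈ S1, ‖∑ i, u (x i) (y i)‖ - r₁ ≤ sInf S2 := fun r₁ h₁ =>
    le_csInf hne2 (fun r₂ h₂ => by linarith [hkey r₁ h₁ r₂ h₂])
  have h3 : ‖∑ i, u (x i) (y i)‖ - sInf S2 ≤ sInf S1 :=
    le_csInf hne1 (fun r₁ h₁ => by linarith [h2 r₁ h₁])
  linarith [h3]
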